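/- Let I be a finite index set and for each y ∈ I let τ_y, σ_y be real numbers with τ_y < σ_y and 0 < σ_y. Let f : ℝ × ℝ → ℝ be continuously differentiable, and let t ≥ 0. Then ∑_{y∈I} f(t−τ_y, t)·𝟙[τ_y ≤ t < σ_y] = ∑_{y∈I} f(−τ_y, 0)·𝟙[τ_y < 0] + ∫_0^t ( ∑_{y∈I} (∂₁f(s−τ_y, s) + ∂₂f(s−τ_y, s))·𝟙[τ_y ≤ s < σ_y] ) ds + ∑_{y∈I} f(0, τ_y)·𝟙[0 ≤ τ_y ≤ t] − ∑_{y∈I} f(σ_y−τ_y, σ_y)·𝟙[σ_y ≤ t]. -/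

import Mathlib

open MeasureTheory Set

lemma aux_hasDeriv (f : ℝ × ℝ → ℝ) (hf : ContDiff ℝ 1 f) (τ s : ℝ) :
    HasDerivAt (fun s => f (s - τ, s))
      (fderiv ℝ f (s - τ, s) (1, 0) + fderiv ℝ f (s - τ, s) (0, 1)) s := by
  have h1 : HasDerivAt (fun s : ℝ => ((s - τ, s) : ℝ × ℝ)) ((1 : ℝ), (1 : ℝ)) s :=
    ((hasDerivAt_id s).sub_const τ).prodMk (hasDerivAt_id s)
  have h2 : HasDerivAt (f ∘ fun s => (s - τ, s)) (fderiv ℝ f (s - τ, s) (1, 1)) s :=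
    ((hf.differentiable one_ne_zero _).hasFDerivAt).comp_hasDerivAt s h1
  rw [Function.comp_def] at h2
  have : fderiv ℝ f (s - τ, s) (1, 1)
      = fderiv ℝ f (s - τ, s) (1, 0) + fderiv ℝ f (s - τ, s) (0, 1) := by
    rw [show ((1:ℝ), (1:ℝ)) = ((1:ℝ), (0:ℝ)) + ((0:ℝ), (1:ℝ)) by simp, map_add]
  rwa [this] at h2

lemma aux_cont (f : ℝ × ℝ → ℝ) (hf : ContDiff ℝ 1 f) (τ : ℝ) :
    Continuous (fun s => fderiv ℝ f (s - τ, s) (1, 0) + fderiv ℝ f (s - τ, s) (0, 1)) := by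
  have hφ : Continuous (fun s : ℝ => ((s - τ, s) : ℝ × ℝ)) :=
    (continuous_id.sub continuous_const).prodMk continuous_id
  have hc : Continuous (fun s : ℝ => fderiv ℝ f (s - τ, s)) :=
    (hf.continuous_fderiv one_ne_zero).comp hφ
  exact (hc.clm_apply continuous_const).add (hc.clm_apply continuous_const)

lemma aux_intable (f : ℝ × ℝ → ℝ) (hf : ContDiff ℝ 1 f) (τ σ a b : ℝ) :
    IntervalIntegrable (fun s => if τ ≤ s ∧ s < σ then
      fderiv ℝ f (s - τ, s) (1, 0) + fderiv ℝ f (s - τ, s) (0, 1) else 0) volume a b := by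
  have h : (fun s => if τ ≤ s ∧ s < σ then
      fderiv ℝ f (s - τ, s) (1, 0) + fderiv ℝ f (s - τ, s) (0, 1) else 0)
      = (Ico τ σ).indicator
          (fun s => fderiv ℝ f (s - τ, s) (1, 0) + fderiv ℝ f (s - τ, s) (0, 1)) := by
    funext s; simp [Set.indicator_apply, Set.mem_Ico]
  have h2 := (aux_cont f hf τ).intervalIntegrable (μ := volume) a b
  rw [intervalIntegrable_iff] at h2 ⊢
  rw [h]
  exact h2.indicator measurableSet_Ico

lemma aux_key (τ σ : ℝ) (hτσ : τ < σ) (hσ0 : 0 < σ) (f : ℝ × ℝ → ℝ) (hf : ContDiff ℝ 1 f)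
    (t : ℝ) (ht : 0 ≤ t) :
    (if τ ≤ t ∧ t < σ then f (t - τ, t) else 0)
      = (if τ < 0 then f (-τ, 0) else 0)
        + (∫ s in (0:ℝ)..t, (if τ ≤ s ∧ s < σ then
            fderiv ℝ f (s - τ, s) (1, 0) + fderiv ℝ f (s - τ, s) (0, 1) else 0))
        + (if 0 ≤ τ ∧ τ ≤ t then f (0, τ) else 0)
        - (if σ ≤ t then f (σ - τ, σ) else 0) := by
  set G : ℝ → ℝ := fun s => fderiv ℝ f (s - τ, s) (1, 0) + fderiv ℝ f (s - τ, s) (0, 1) with hG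
  set F : ℝ → ℝ := fun s => if τ ≤ s ∧ s < σ then G s else 0 with hF
  by_cases htτ : t < τ
  · have h0 : ∫ s in (0:ℝ)..t, F s = 0 := by
      have he : Set.EqOn F (fun _ => (0:ℝ)) (Set.uIcc 0 t) := by
        intro s hs
        rw [Set.uIcc_of_le ht] at hs
        have : ¬ (τ ≤ s ∧ s < σ) := fun h => absurd (h.1.trans hs.2) (not_le.2 htτ)
        simp [hF, this]
      rw [intervalIntegral.integral_congr he, intervalIntegral.integral_zero]
    rw [h0]
    have h1 : ¬ τ < 0 := not_lt.2 (le_of_lt (lt_of_le_of_lt ht htτ))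
    have h2 : ¬ (τ ≤ t ∧ t < σ) := fun h => absurd h.1 (not_le.2 htτ)
    have h3 : ¬ (0 ≤ τ ∧ τ ≤ t) := fun h => absurd h.2 (not_le.2 htτ)
    have h4 : ¬ σ ≤ t := not_le.2 (htτ.trans hτσ)
    simp [h1, h2, h3, h4]
  · push_neg at htτ
    set a : ℝ := max 0 τ with ha
    set b : ℝ := min t σ with hb
    have h0a : (0:ℝ) ≤ a := le_max_left 0 τ
    have hab : a ≤ b := max_le (le_min ht hσ0.le) (le_min htτ hτσ.le)
    have hbt : b ≤ t := min_le_left t σ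
    have hbσ : b ≤ σ := min_le_right t σ
    have hτa : τ ≤ a := le_max_right 0 τ
    have hsplit : (∫ s in (0:ℝ)..t, F s)
        = (∫ s in (0:ℝ)..a, F s) + (∫ s in a..b, F s) + (∫ s in b..t, F s) := by
      rw [intervalIntegral.integral_add_adjacent_intervals (aux_intable f hf τ σ 0 a)
        (aux_intable f hf τ σ a b),
        intervalIntegral.integral_add_adjacent_intervals (aux_intable f hf τ σ 0 b)
        (aux_intable f hf τ σ b t)]
    have hae : ∀ᵐ x : ℝ, x ≠ τ ∧ x ≠ σ := by
      rw [MeasureTheory.ae_iff]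
      refine measure_mono_null (fun x hx => ?_) (measure_union_null
        (measure_singleton τ) (measure_singleton σ))
      simp only [Set.mem_setOf_eq, not_and_or, not_not] at hx
      rcases hx with h | h <;> simp [h]
    have h1 : (∫ s in (0:ℝ)..a, F s) = 0 := by
      have : (∫ s in (0:ℝ)..a, F s) = ∫ s in (0:ℝ)..a, (0:ℝ) := by
        apply intervalIntegral.integral_congr_ae
        filter_upwards [hae] with x hx hmem
        rw [Set.uIoc_of_le h0a] at hmem
        rcases le_or_gt τ 0 with h | h
        · have hx0 : x ≤ 0 := by simpa [ha, h] using hmem.2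
          exact absurd hmem.1 (not_lt.2 hx0)
        · have hxa : x ≤ τ := by simpa [ha, h.le] using hmem.2
          have : ¬ (τ ≤ x ∧ x < σ) := fun hc => hx.1 (le_antisymm hxa hc.1)
          simp [hF, this]
      rw [this, intervalIntegral.integral_zero]
    have h2 : (∫ s in a..b, F s) = f (b - τ, b) - f (a - τ, a) := by
      have heq : (∫ s in a..b, F s) = ∫ s in a..b, G s := by
        apply intervalIntegral.integral_congr_ae
        filter_upwards [hae] with x hx hmem
        rw [Set.uIoc_of_le hab] at hmem
        have hc : τ ≤ x ∧ x < σ :=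
          ⟨(hτa.trans hmem.1.le), lt_of_le_of_ne (hmem.2.trans hbσ) hx.2⟩
        simp [hF, hc]
      rw [heq]
      exact intervalIntegral.integral_eq_sub_of_hasDerivAt
        (fun x _ => aux_hasDeriv f hf τ x) ((aux_cont f hf τ).intervalIntegrable a b)
    have h3 : (∫ s in b..t, F s) = 0 := by
      rcases le_or_gt σ t with h | h
      · have hbσ2 : b = σ := min_eq_right h
        have he : Set.EqOn F (fun _ => (0:ℝ)) (Set.uIcc b t) := by
          intro s hs
          rw [Set.uIcc_of_le hbt, hbσ2] at hs
          have : ¬ s < σ := not_lt.2 hs.1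
          simp [hF, this]
        rw [intervalIntegral.integral_congr he, intervalIntegral.integral_zero]
      · have : b = t := min_eq_left h.le
        rw [this, intervalIntegral.integral_same]
    rw [hsplit, h1, h2, h3]
    rcases lt_or_ge t σ with hts | hts
    · have hb2 : b = t := min_eq_left hts.le
      rcases lt_or_ge τ 0 with hτ0 | hτ0
      · have ha2 : a = 0 := max_eq_left hτ0.le
        rw [ha2, hb2, if_pos ⟨htτ, hts⟩, if_pos hτ0,
          if_neg (fun hc => absurd hc.1 (not_le.2 hτ0)), if_neg (not_le.2 hts)]
        simp only [zero_sub]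
        ring
      · have ha2 : a = τ := max_eq_right hτ0
        rw [ha2, hb2, if_pos ⟨htτ, hts⟩, if_neg (not_lt.2 hτ0),
          if_pos ⟨hτ0, htτ⟩, if_neg (not_le.2 hts)]
        simp only [sub_self]
        ring
    · have hb2 : b = σ := min_eq_right hts
      rcases lt_or_ge τ 0 with hτ0 | hτ0
      · have ha2 : a = 0 := max_eq_left hτ0.le
        rw [ha2, hb2, if_neg (fun hc => absurd hts (not_le.2 hc.2)), if_pos hτ0,
          if_neg (fun hc => absurd hc.1 (not_le.2 hτ0)), if_pos hts]
        simp only [zero_sub]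
        ring
      · have ha2 : a = τ := max_eq_right hτ0
        rw [ha2, hb2, if_neg (fun hc => absurd hts (not_le.2 hc.2)), if_neg (not_lt.2 hτ0),
          if_pos ⟨hτ0, htτ⟩, if_pos hts]
        simp only [sub_self]
        ring

theorem stmt0 {ι : Type*} (I : Finset ι) (τ σ : ι → ℝ)
    (hτσ : ∀ y ∈ I, τ y < σ y) (hσ : ∀ y ∈ I, 0 < σ y)
    (f : ℝ × ℝ → ℝ) (hf : ContDiff ℝ 1 f) (t : ℝ) (ht : 0 ≤ t) :
    ∑ y ∈ I, (if τ y ≤ t ∧ t < σ y then f (t - τ y, t) else 0)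
      = ∑ y ∈ I, (if τ y < 0 then f (-τ y, 0) else 0)
        + (∫ s in (0:ℝ)..t, ∑ y ∈ I,
            (if τ y ≤ s ∧ s < σ y then
              fderiv ℝ f (s - τ y, s) (1, 0) + fderiv ℝ f (s - τ y, s) (0, 1) else 0))
        + ∑ y ∈ I, (if 0 ≤ τ y ∧ τ y ≤ t then f (0, τ y) else 0)
        - ∑ y ∈ I, (if σ y ≤ t then f (σ y - τ y, σ y) else 0) := by
  rw [intervalIntegral.integral_finset_sum (fun y _ => aux_intable f hf (τ y) (σ y) 0 t),
    ← Finset.sum_add_distrib, ← Finset.sum_add_distrib, ← Finset.sum_sub_distrib]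
  exact Finset.sum_congr rfl fun y hy => aux_key (τ y) (σ y) (hτσ y hy) (hσ y hy) f hf t ht
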